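/- Let f : R → R be a continuous piecewise affine function which is affine on each of the intervals determined by finitely many break points a_1 < ⋯ < a_ℓ. Let X be an integrable real random variable and Γ = {x_1, …, x_N} a finite grid with Voronoi cells C_1, …, C_N such that the induced quantization \hat{X} satisfies the cell-wise stationarity E[(X − x_i) 1_{X ∈ C_i}] = 0 for every i. Then E[f(X)] − E[f(\hat{X})] = Σ_{i ∈ J} ∫_{C_i} (f(ξ) − f(x_i)) P_X(dξ), where J is the set of indices i such that C_i contains a break point, and consequently |E[f(X)] − E[f(\hat{X})]| ≤ ℓ · [f]_Lip · max_{i ∈ J} ∫_{C_i} |ξ − x_i| P_X(dξ). -/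

import Mathlib

open MeasureTheory Classical

/-- for a continuous piecewise affine Lipschitz function `f` with break points
`a_1, …, a_ℓ` and a cell-wise stationary Voronoi quantization (grid `x i`, cells `C i`,
`∫_{C i} (ξ − x i) dμ = 0`), the weak error localizes to the cells containing a break:
`E[f(X)] − E[f(X̂)] = ∑_{i ∈ J} ∫_{C i} (f ξ − f (x i)) dμ`, and consequently it is bounded
by `ℓ · [f]_Lip · max_{i ∈ J} ∫_{C i} |ξ − x i| dμ`. -/
theorem stmt7 (μ : Measure ℝ) [IsProbabilityMeasure μ] {N ℓ : ℕ}
    (x : Fin N → ℝ) (C : Fin N → Set ℝ)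
    (hCmeas : ∀ i, MeasurableSet (C i))
    (hdisj : Pairwise (Function.onFun Disjoint C))
    (hcover : (⋃ i, C i) = Set.univ)
    (hx : ∀ i, x i ∈ C i)
    (hstat : ∀ i, ∫ ξ in C i, (ξ - x i) ∂μ = 0)
    (f : ℝ → ℝ) (hfcont : Continuous f)
    (L : ℝ) (hlip : ∀ u v, |f u - f v| ≤ L * |u - v|)
    (a : Fin ℓ → ℝ)
    (haff : ∀ i, (∀ k, a k ∉ C i) → ∃ α β : ℝ, ∀ ξ ∈ C i, f ξ = α * ξ + β)
    (hintf : Integrable f μ) (hintid : Integrable (fun ξ : ℝ => ξ) μ) :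
    (∫ ξ, f ξ ∂μ) - (∑ i, f (x i) * (μ (C i)).toReal) =
        ∑ i ∈ Finset.univ.filter (fun i => ∃ k, a k ∈ C i),
          ∫ ξ in C i, (f ξ - f (x i)) ∂μ ∧
      ∀ B : ℝ, 0 ≤ B →
        (∀ i ∈ Finset.univ.filter (fun i => ∃ k, a k ∈ C i),
            (∫ ξ in C i, |ξ - x i| ∂μ) ≤ B) →
        |(∫ ξ, f ξ ∂μ) - ∑ i, f (x i) * (μ (C i)).toReal| ≤ ℓ * L * B := by
  classical
  have hL : 0 ≤ L := by
    have h := hlip 0 1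
    simp only [sub_zero, zero_sub, abs_neg, abs_one, mul_one] at h
    exact (abs_nonneg _).trans h
  set J := Finset.univ.filter (fun i => ∃ k, a k ∈ C i) with hJ
  have hintfi : ∀ i : Fin N, IntegrableOn f (C i) μ := fun i => hintf.integrableOn
  have hintci : ∀ i : Fin N, IntegrableOn (fun _ : ℝ => f (x i)) (C i) μ :=
    fun i => integrableOn_const (measure_ne_top _ _)
  have hintxi : ∀ i : Fin N, IntegrableOn (fun ξ : ℝ => ξ - x i) (C i) μ :=
    fun i => (hintid.sub (integrable_const (x i))).integrableOn
  have hsum : (∫ ξ, f ξ ∂μ) = ∑ i, ∫ ξ in C i, f ξ ∂μ := by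
    rw [← setIntegral_univ (μ := μ) (f := f), ← hcover,
      integral_iUnion hCmeas hdisj (hcover ▸ hintf.integrableOn), tsum_fintype]
  have key : (∫ ξ, f ξ ∂μ) - (∑ i, f (x i) * (μ (C i)).toReal)
      = ∑ i, ∫ ξ in C i, (f ξ - f (x i)) ∂μ := by
    rw [hsum, ← Finset.sum_sub_distrib]
    refine Finset.sum_congr rfl fun i _ => ?_
    rw [integral_sub (hintfi i) (hintci i), setIntegral_const, smul_eq_mul, mul_comm, measureReal_def]
  have hzero : ∀ i : Fin N, i ∉ J → (∫ ξ in C i, (f ξ - f (x i)) ∂μ) = 0 := by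
    intro i hi
    simp only [hJ, Finset.mem_filter, Finset.mem_univ, true_and, not_exists] at hi
    obtain ⟨α, β, hab⟩ := haff i hi
    have heq : Set.EqOn (fun ξ => f ξ - f (x i)) (fun ξ => α * (ξ - x i)) (C i) := by
      intro ξ hξ
      simp only
      rw [hab ξ hξ, hab (x i) (hx i)]
      ring
    rw [setIntegral_congr_fun (hCmeas i) heq, integral_const_mul, hstat i, mul_zero]
  have hfull : (∑ i, ∫ ξ in C i, (f ξ - f (x i)) ∂μ)
      = ∑ i ∈ J, ∫ ξ in C i, (f ξ - f (x i)) ∂μ := by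
    rw [hJ]
    exact (Finset.sum_filter_of_ne fun i _ h => by
      by_contra hc
      exact h (hzero i (by simpa [hJ] using hc))).symm
  have hcard : J.card ≤ ℓ := by
    have hg : ∀ k : Fin ℓ, ∃ i, a k ∈ C i := by
      intro k
      have : a k ∈ ⋃ i, C i := hcover ▸ Set.mem_univ _
      simpa using this
    choose g hg using hg
    have hsub : J ⊆ Finset.image g Finset.univ := by
      intro i hi
      simp only [hJ, Finset.mem_filter, Finset.mem_univ, true_and] at hi
      obtain ⟨k, hk⟩ := hi
      have hgk : g k = i := by
        by_contra hne
        exact Set.disjoint_left.mp (hdisj hne) (hg k) hk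
      exact Finset.mem_image.2 ⟨k, Finset.mem_univ _, hgk⟩
    calc J.card ≤ (Finset.image g Finset.univ).card := Finset.card_le_card hsub
      _ ≤ (Finset.univ : Finset (Fin ℓ)).card := Finset.card_image_le
      _ = ℓ := by simp
  refine ⟨key.trans hfull, ?_⟩
  intro B hB hmax
  rw [key, hfull]
  have hterm : ∀ i ∈ J, |∫ ξ in C i, (f ξ - f (x i)) ∂μ| ≤ L * B := by
    intro i hi
    have h1 : |∫ ξ in C i, (f ξ - f (x i)) ∂μ| ≤ ∫ ξ in C i, |f ξ - f (x i)| ∂μ := by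
      simpa [Real.norm_eq_abs] using
        norm_integral_le_integral_norm (μ := μ.restrict (C i)) (fun ξ => f ξ - f (x i))
    have h2 : (∫ ξ in C i, |f ξ - f (x i)| ∂μ) ≤ ∫ ξ in C i, L * |ξ - x i| ∂μ := by
      refine setIntegral_mono_on ((hintfi i).sub (hintci i)).abs
        ((hintxi i).abs.const_mul L) (hCmeas i) fun ξ _ => hlip ξ (x i)
    have h3 : (∫ ξ in C i, L * |ξ - x i| ∂μ) = L * ∫ ξ in C i, |ξ - x i| ∂μ :=
      integral_const_mul _ _
    calc |∫ ξ in C i, (f ξ - f (x i)) ∂μ| ≤ L * ∫ ξ in C i, |ξ - x i| ∂μ :=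
          h1.trans (h2.trans_eq h3)
      _ ≤ L * B := mul_le_mul_of_nonneg_left (hmax i hi) hL
  calc |∑ i ∈ J, ∫ ξ in C i, (f ξ - f (x i)) ∂μ|
      ≤ ∑ i ∈ J, |∫ ξ in C i, (f ξ - f (x i)) ∂μ| := Finset.abs_sum_le_sum_abs _ _
    _ ≤ J.card • (L * B) := Finset.sum_le_card_nsmul _ _ _ hterm
    _ = (J.card : ℝ) * (L * B) := by simp [nsmul_eq_mul]
    _ ≤ (ℓ : ℝ) * (L * B) := by
        have : (J.card : ℝ) ≤ (ℓ : ℝ) := by exact_mod_cast hcard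
        exact mul_le_mul_of_nonneg_right this (mul_nonneg hL hB)
    _ = ℓ * L * B := by ring
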